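/- Let E ∈ SL(2,ℝ) be a matrix whose trace is a rational number t with |t| < 2 and t ∉ {−1, 0, 1}. Then E is elliptic (it has a unique fixed point in ℍ) and E has infinite order in SL(2,ℝ). -/

import Mathlib

open Matrix MatrixGroups UpperHalfPlane

private def traceSeq (t : ℚ) : ℕ → ℚ
  | 0 => 2
  | 1 => t
  | (n+2) => t * traceSeq t (n+1) - traceSeq t n

private lemma traceSeq_trace (A : Matrix (Fin 2) (Fin 2) ℝ) (hA : A.det = 1) (t : ℚ)
    (ht : A.trace = (t : ℝ)) (n : ℕ) : (A ^ n).trace = (traceSeq t n : ℝ) := by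
  have hsq : A * A = A.trace • A - 1 := by
    have hd : A 0 0 * A 1 1 - A 0 1 * A 1 0 = 1 := by rw [← Matrix.det_fin_two]; exact hA
    ext i j
    fin_cases i <;> fin_cases j <;>
      simp [Matrix.mul_apply, Fin.sum_univ_two, Matrix.trace_fin_two, Matrix.one_apply] <;>
      nlinarith [hd]
  have key : ∀ n : ℕ, (A ^ n).trace = (traceSeq t n : ℝ) ∧
      (A ^ (n+1)).trace = (traceSeq t (n+1) : ℝ) := by
    intro n
    induction n with
    | zero =>
      constructor
      · simp [traceSeq, Matrix.trace_one]
      · simp [traceSeq, ht]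
    | succ n ih =>
      refine ⟨ih.2, ?_⟩
      have : A ^ (n + 2) = A.trace • A ^ (n+1) - A ^ n := by
        have : A ^ (n+2) = A ^ n * (A * A) := by rw [pow_succ, pow_succ, mul_assoc]
        rw [this, hsq]
        rw [mul_sub, mul_one, Matrix.mul_smul, ← pow_succ]
      rw [this, Matrix.trace_sub, Matrix.trace_smul, ih.1, ih.2, ht]
      show (t : ℝ) * _ - _ = _
      rw [show traceSeq t (n+2) = t * traceSeq t (n+1) - traceSeq t n from rfl]
      push_cast
      ring
  exact (key n).1

private lemma traceSeq_ne_two (t : ℚ) (p : ℕ) [hp : Fact p.Prime]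
    (hv : padicValRat p t < 0) (n : ℕ) (hn : 0 < n) : traceSeq t n ≠ 2 := by
  set v := padicValRat p t with hvdef
  have ht0 : t ≠ 0 := by
    intro h; rw [h] at hvdef; simp [padicValRat.zero] at hvdef; omega
  have hval2 : (0:ℤ) ≤ padicValRat p 2 := by
    have h2 := zero_le_padicValRat_of_nat (p := p) 2
    simpa using h2
  have key : ∀ m : ℕ,
      (traceSeq t (m+1) ≠ 0 ∧ padicValRat p (traceSeq t (m+1)) = ((m:ℤ)+1) * v) ∧
      (traceSeq t (m+2) ≠ 0 ∧ padicValRat p (traceSeq t (m+2)) = ((m:ℤ)+2) * v) := by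
    intro m
    induction m with
    | zero =>
      have h1 : traceSeq t 1 = t := rfl
      have h2 : traceSeq t 2 = t * t - 2 := by
        show t * traceSeq t 1 - traceSeq t 0 = _; rfl
      have hmul : padicValRat p (t * t) = 2 * v := by
        rw [padicValRat.mul ht0 ht0]; ring
      have hne : t * t - 2 ≠ 0 := by
        intro h
        have htt : t * t = 2 := by linarith
        rw [htt] at hmul
        omega
      have hvneg2 : padicValRat p (t*t) < padicValRat p (-2) := by
        rw [padicValRat.neg, hmul]; omega
      have hv2 : padicValRat p (traceSeq t 2) = 2 * v := by
        rw [h2, show t * t - 2 = t * t + (-2) by ring,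
          padicValRat.add_eq_of_lt (by rw [← sub_eq_add_neg]; exact hne)
            (mul_ne_zero ht0 ht0) (by norm_num) hvneg2, hmul]
      refine ⟨⟨?_, ?_⟩, ?_, ?_⟩
      · rw [show (0:ℕ)+1 = 1 from rfl, h1]; exact ht0
      · rw [show (0:ℕ)+1 = 1 from rfl, h1]; push_cast; ring
      · rw [show (0:ℕ)+2 = 2 from rfl, h2]; exact hne
      · rw [show (0:ℕ)+2 = 2 from rfl, hv2]; push_cast; ring
    | succ m ih =>
      obtain ⟨⟨h1ne, h1val⟩, h2ne, h2val⟩ := ih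
      refine ⟨⟨h2ne, by rw [h2val]; push_cast; ring⟩, ?_⟩
      have h3 : traceSeq t (m+3) = t * traceSeq t (m+2) - traceSeq t (m+1) := rfl
      have hmul : padicValRat p (t * traceSeq t (m+2)) = ((m:ℤ)+3) * v := by
        rw [padicValRat.mul ht0 h2ne, h2val]; ring
      have hvlt : padicValRat p (t * traceSeq t (m+2)) <
          padicValRat p (-(traceSeq t (m+1))) := by
        rw [padicValRat.neg, hmul, h1val]; nlinarith
      have hne : t * traceSeq t (m+2) - traceSeq t (m+1) ≠ 0 := by
        intro h
        have heq : t * traceSeq t (m+2) = traceSeq t (m+1) := by linarith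
        rw [heq, h1val] at hmul
        have : v ≠ 0 := by omega
        nlinarith
      have hval : padicValRat p (traceSeq t (m+3)) = ((m:ℤ)+3) * v := by
        rw [h3, show t * traceSeq t (m+2) - traceSeq t (m+1)
              = t * traceSeq t (m+2) + (-(traceSeq t (m+1))) by ring,
          padicValRat.add_eq_of_lt (by rw [← sub_eq_add_neg]; exact hne)
            (mul_ne_zero ht0 h2ne) (neg_ne_zero.mpr h1ne) hvlt, hmul]
      constructor
      · rw [show m+1+2 = m+3 from rfl, h3]; exact hne
      · rw [show m+1+2 = m+3 from rfl, hval]; push_cast; ring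
  intro habs
  obtain ⟨m, rfl⟩ : ∃ m, n = m + 1 := ⟨n - 1, by omega⟩
  have hval := (key m).1.2
  rw [habs] at hval
  have hlt : ((m:ℤ)+1) * v < 0 := mul_neg_of_pos_of_neg (by positivity) hv
  omega

/-- A matrix in `SL(2,ℝ)` whose trace is a rational number `t` with `|t| < 2` and
`t ∉ {-1, 0, 1}` is elliptic of infinite order. -/
theorem rational_trace_elliptic_infinite_order (E : SL(2, ℝ)) (t : ℚ)
    (ht : Matrix.trace (E : Matrix (Fin 2) (Fin 2) ℝ) = (t : ℝ))
    (hlt : |t| < 2)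
    (h : t ≠ -1 ∧ t ≠ 0 ∧ t ≠ 1) :
    (∃! z : ℍ, E • z = z) ∧ (∀ n : ℕ, 0 < n → E ^ n ≠ 1) := by
  obtain ⟨hm1, h0, hp1⟩ := h
  set A := (E : Matrix (Fin 2) (Fin 2) ℝ) with hAdef
  set a := A 0 0 with ha
  set b := A 0 1 with hb
  set c := A 1 0 with hc'
  set d := A 1 1 with hd'
  have hdetA : A.det = 1 := E.property
  have hdet : a * d - b * c = 1 := by rw [← Matrix.det_fin_two]; exact hdetA
  have htr : a + d = (t : ℝ) := by rw [← Matrix.trace_fin_two]; exact ht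
  have habs : |(t:ℝ)| < 2 := by
    have : ((|t| : ℚ) : ℝ) < ((2:ℚ):ℝ) := by exact_mod_cast hlt
    simpa [abs_of_nonneg, Rat.cast_abs] using this
  have ht4 : ((t:ℝ))^2 < 4 := by
    have := abs_lt.mp habs
    nlinarith [this.1, this.2]
  have hc : c ≠ 0 := by
    intro h0c
    rw [h0c] at hdet
    have h5 : (a + d)^2 < 4 := by rw [htr]; exact ht4
    nlinarith [sq_nonneg (a - d), hdet, h5]
  -- Part 1: unique fixed point
  have hsmul : ∀ w : ℍ, E • w = w ↔ (a : ℂ) * w + b = ((c : ℂ) * w + d) * w := by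
    intro w
    have hden : (c : ℂ) * w + d ≠ 0 := by
      intro hz
      have him : ((c:ℂ) * w + d).im = c * w.im := by
        simp [Complex.add_im, Complex.mul_im, UpperHalfPlane.coe_im]
      rw [hz] at him
      simp at him
      rcases him with h1 | h2
      · exact hc h1
      · exact (w.im_pos.ne') h2
    rw [UpperHalfPlane.specialLinearGroup_apply]
    rw [UpperHalfPlane.ext_iff]
    simp only [UpperHalfPlane.coe_mk, Algebra.algebraMap_self, RingHom.id_apply]
    rw [div_eq_iff hden, mul_comm ((c:ℂ) * w + d) (w:ℂ)]
  constructor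
  · -- existence and uniqueness
    have hcabs : 0 < |c| := abs_pos.mpr hc
    set Δ := 4 - (t:ℝ)^2 with hΔdef
    have hΔ : 0 < Δ := by linarith
    set s := Real.sqrt Δ with hsdef
    have hs : s^2 = Δ := Real.sq_sqrt hΔ.le
    have hspos : 0 < s := Real.sqrt_pos.mpr hΔ
    set im0 := s / (2*|c|) with him0def
    have him0 : 0 < im0 := by positivity
    set z0 : ℂ := (((a-d)/(2*c) : ℝ) : ℂ) + (im0 : ℝ) * Complex.I with hz0def
    have hz0im : z0.im = im0 := by
      rw [hz0def, Complex.add_im, Complex.ofReal_im, Complex.mul_im, Complex.ofReal_re,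
        Complex.ofReal_im, Complex.I_im, Complex.I_re]
      ring
    have key : (2*(c:ℂ)*z0 - ((a:ℂ)-(d:ℂ)))^2 = ((a:ℂ)-(d:ℂ))^2 + 4*(b:ℂ)*(c:ℂ) := by
      have h2 : 2*(c:ℂ)*z0 - ((a:ℂ)-(d:ℂ)) = ((2*c*im0 : ℝ) : ℂ) * Complex.I := by
        rw [hz0def]
        push_cast
        have : (c:ℂ) ≠ 0 := by exact_mod_cast hc
        field_simp
        ring
      rw [h2, mul_pow, Complex.I_sq]
      have h1 : (2*c*im0)^2 = s^2 := by
        rw [him0def]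
        field_simp
        nlinarith [sq_abs c]
      have hr : (2*c*im0)^2 * (-1 : ℝ) = (a-d)^2 + 4*b*c := by
        linear_combination -h1 - hs - hΔdef - (a+d+(t:ℝ))*htr + 4*hdet
      push_cast
      have hr' := congrArg (fun x : ℝ => (x : ℂ)) hr; push_cast at hr'; linear_combination hr'
    have heq : (a : ℂ) * z0 + b = ((c : ℂ) * z0 + d) * z0 := by
      have h4c : (4*(c:ℂ)) ≠ 0 := by
        simp only [ne_eq, mul_eq_zero]
        push_neg
        exact ⟨by norm_num, by exact_mod_cast hc⟩
      apply mul_left_cancel₀ h4c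
      linear_combination -key
    refine ⟨⟨z0, by rw [hz0im]; exact him0⟩, ?_, ?_⟩
    · exact (hsmul _).mpr heq
    · intro w hw
      rw [hsmul] at hw
      by_contra hne
      have hne' : (w : ℂ) ≠ z0 := by
        intro hcc
        apply hne
        apply UpperHalfPlane.ext
        exact hcc
      have hfac : ((w:ℂ) - z0) * ((a:ℂ) - d - c*((w:ℂ)+z0)) = 0 := by
        linear_combination hw - heq
      rcases mul_eq_zero.mp hfac with h1 | h2
      · exact hne' (sub_eq_zero.mp h1)
      · have him2 : ((a:ℂ) - d - c*((w:ℂ)+z0)).im = -(c * (w.im + im0)) := by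
          simp only [Complex.sub_im, Complex.mul_im, Complex.add_im, Complex.ofReal_im,
            Complex.ofReal_re, UpperHalfPlane.coe_im, hz0im]
          ring
        rw [h2] at him2
        simp only [Complex.zero_im] at him2
        have hpos : 0 < w.im + im0 := by positivity
        have : c * (w.im + im0) = 0 := by linarith
        rcases mul_eq_zero.mp this with hh | hh
        · exact hc hh
        · linarith
  · -- Part 2: infinite order
    intro n hn hEn
    have hden1 : t.den ≠ 1 := by
      intro hd
      have hti : t = (t.num : ℚ) := by
        conv_lhs => rw [← Rat.num_div_den t]
        rw [hd]; simp
      have hz : |(t.num : ℚ)| < 2 := by rw [← hti]; exact_mod_cast hlt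
      have hz' : |t.num| < 2 := by exact_mod_cast hz
      have := abs_lt.mp hz'
      have : t.num = -1 ∨ t.num = 0 ∨ t.num = 1 := by omega
      rcases this with h' | h' | h'
      · exact hm1 (by rw [hti, h']; norm_num)
      · exact h0 (by rw [hti, h']; norm_num)
      · exact hp1 (by rw [hti, h']; norm_num)
    obtain ⟨p, pp, hpd⟩ := t.den.exists_prime_and_dvd hden1
    haveI := Fact.mk pp
    have hv : padicValRat p t < 0 := by
      rw [padicValRat_def]
      have hnum : padicValInt p t.num = 0 := by
        apply padicValInt.eq_zero_of_not_dvd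
        intro hdvd
        have hdn : p ∣ t.num.natAbs := by
          have := Int.natAbs_dvd_natAbs.mpr hdvd
          simpa using this
        have : p ∣ Nat.gcd t.num.natAbs t.den := Nat.dvd_gcd hdn hpd
        rw [t.reduced] at this
        exact pp.one_lt.ne' (Nat.eq_one_of_dvd_one this)
      have hd1 : 1 ≤ padicValNat p t.den := one_le_padicValNat_of_dvd t.pos.ne' hpd
      omega
    have hA1 : A ^ n = 1 := by
      have := congrArg (fun g : SL(2,ℝ) => (g : Matrix (Fin 2) (Fin 2) ℝ)) hEn
      simpa using this
    have htrn := traceSeq_trace A hdetA t ht n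
    rw [hA1] at htrn
    have h2 : (traceSeq t n : ℝ) = 2 := by
      rw [← htrn, Matrix.trace_one]
      norm_num
    have : traceSeq t n = 2 := by exact_mod_cast h2
    exact traceSeq_ne_two t p hv n hn this
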